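/- Let k, l be natural numbers, let U be an open subset of X such that T^k(x) = T^l(x) for every x ∈ U and such that the restrictions of T^k and T^l to U are injective, and let f : X → ℂ be a continuous function whose support is contained in U. Then M_f S^k (S*)^l M_f = M_g as bounded operators on ℓ²(X), where g is the continuous function g(x) = f(x)²·(I_k(x)·I_l(x))^{-1/2}. -/

import Mathlib

open Classical

noncomputable section

/-- `ℓ²(X)`: the Hilbert space of square-summable complex families indexed by `X`. -/
abbrev l2 (X : Type*) : Type _ := lp (fun _ : X => ℂ) 2

/-- The orthonormal basis vector `e_x` of `ℓ²(X)`. -/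
def e {X : Type*} (x : X) : l2 X := lp.single 2 x 1

/-- `I_k(x) = ∏_{j=1}^{k} ℒ(1)(T^j(x))`, where `ℒ(1)(x) = card (T⁻¹({x}))`
(with `I_0 = 1`). -/
def Ik {X : Type*} (T : X → X) (k : ℕ) (x : X) : ℝ :=
  ∏ j ∈ Finset.range k, (Nat.card (T ⁻¹' {T^[j + 1] x}) : ℝ)

end

set_option linter.unusedSectionVars false
set_option linter.unusedVariables false

section Aux
variable {X : Type*}

lemma e_apply (x z : X) : (e x : ∀ _ : X, ℂ) z = if z = x then 1 else 0 := by
  rw [e, lp.single_apply]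
  split_ifs with h <;> simp [h]

lemma coord_eq_inner (v : l2 X) (z : X) : v z = @inner ℂ _ _ (e z) v := by
  rw [e, lp.inner_single_left]; simp

lemma ext_e {V : Type*} [NormedAddCommGroup V] [NormedSpace ℂ V]
    (A B : l2 X →L[ℂ] V) (h : ∀ x, A (e x) = B (e x)) (v : l2 X) : A v = B v := by
  have hv := lp.hasSum_single (E := fun _ : X => ℂ) (p := 2) (by norm_num) v
  have key : ∀ x : X, A (lp.single 2 x (v x)) = B (lp.single 2 x (v x)) := by
    intro x
    have hx : lp.single 2 x (v x) = (v x) • e x := by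
      rw [e, ← lp.single_smul]; norm_num
    rw [hx, map_smul, map_smul, h]
  exact (hv.mapL A).unique (by simpa [key] using hv.mapL B)

variable [TopologicalSpace X] [CompactSpace X] [T2Space X] {T : X → X}

lemma fiber_finite (hT : IsCoveringMap T) (x : X) : (T ⁻¹' {x}).Finite := by
  have : DiscreteTopology (T ⁻¹' {x} : Set X) := (hT x).1
  exact ((isClosed_singleton.preimage hT.continuous).isCompact).finite ⟨this⟩

/-- abbreviation for weights -/
noncomputable def cw (T : X → X) (x : X) : ℝ := (Real.sqrt (Nat.card (T ⁻¹' {x})))⁻¹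

lemma mult_coord {Mf : l2 X →L[ℂ] l2 X} {f : C(X, ℂ)}
    (hMf : ∀ x : X, Mf (e x) = f x • e x) (v : l2 X) (z : X) :
    (Mf v : ∀ _ : X, ℂ) z = f z * v z := by
  have h := ext_e ((innerSL ℂ (e z)).comp Mf)
    (innerSL ℂ ((starRingEnd ℂ) (f z) • e z)) ?_ v
  · rw [ContinuousLinearMap.comp_apply, innerSL_apply_apply, innerSL_apply_apply, inner_smul_left,
      ← coord_eq_inner, ← coord_eq_inner] at h
    simpa using h
  · intro x
    simp only [ContinuousLinearMap.comp_apply, innerSL_apply_apply, inner_smul_left,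
      inner_smul_right, hMf x]
    rw [← coord_eq_inner, e_apply]
    by_cases h : z = x
    · subst h; simp
    · simp [h]

lemma prod_sqrt (n : ℕ) (g : ℕ → ℝ) (hg : ∀ j, 0 ≤ g j) :
    ∏ j ∈ Finset.range n, Real.sqrt (g j) = Real.sqrt (∏ j ∈ Finset.range n, g j) := by
  induction n with
  | zero => simp
  | succ m ih =>
      rw [Finset.prod_range_succ, Finset.prod_range_succ, ih,
        ← Real.sqrt_mul (Finset.prod_nonneg fun j _ => hg j)]

lemma cw_prod (T : X → X) (n : ℕ) (x : X) :
    ∏ j ∈ Finset.range n, cw T (T^[j + 1] x) = (Real.sqrt (Ik T n x))⁻¹ := by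
  simp only [cw]
  rw [Finset.prod_inv_distrib, prod_sqrt n _ (fun j => Nat.cast_nonneg _), Ik]

lemma Ik_nonneg (T : X → X) (n : ℕ) (x : X) : 0 ≤ Ik T n x :=
  Finset.prod_nonneg fun j _ => Nat.cast_nonneg _


variable {S : l2 X →L[ℂ] l2 X}
  (hS : ∀ x : X, S (e x) = (((Real.sqrt (Nat.card (T ⁻¹' {x})))⁻¹ : ℝ) : ℂ) •
      ∑ᶠ y ∈ T ⁻¹' {x}, e y)

include hS

lemma S_e_coord (hT : IsCoveringMap T) (x z : X) :
    (S (e x) : ∀ _ : X, ℂ) z = if T z = x then ((cw T x : ℝ) : ℂ) else 0 := by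
  have hfin := fiber_finite hT x
  have hsum : ∑ᶠ y ∈ T ⁻¹' {x}, e y = ∑ y ∈ hfin.toFinset, e y :=
    finsum_mem_eq_finite_toFinset_sum _ hfin
  rw [hS x, hsum, lp.coeFn_smul, Pi.smul_apply, lp.coeFn_sum, Finset.sum_apply]
  simp only [e_apply]
  rw [Finset.sum_ite_eq]
  have hmem : z ∈ hfin.toFinset ↔ T z = x := by
    simp [Set.Finite.mem_toFinset]
  rw [cw]
  by_cases h : T z = x
  · rw [if_pos (hmem.mpr h), if_pos h, smul_eq_mul, mul_one]
  · rw [if_neg (fun hc => h (hmem.mp hc)), if_neg h, smul_zero]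

lemma S_coord (hT : IsCoveringMap T) (v : l2 X) (z : X) :
    (S v : ∀ _ : X, ℂ) z = ((cw T (T z) : ℝ) : ℂ) * v (T z) := by
  have h := ext_e ((innerSL ℂ (e z)).comp S)
    (innerSL ℂ ((((cw T (T z) : ℝ)) : ℂ) • e (T z))) ?_ v
  · rw [ContinuousLinearMap.comp_apply, innerSL_apply_apply, innerSL_apply_apply, inner_smul_left,
      ← coord_eq_inner, ← coord_eq_inner] at h
    rw [h]
    simp [Complex.conj_ofReal]
  · intro x
    simp only [ContinuousLinearMap.comp_apply, innerSL_apply_apply, inner_smul_left]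
    rw [← coord_eq_inner, ← coord_eq_inner, S_e_coord hS hT, e_apply]
    by_cases h : T z = x
    · rw [if_pos h, if_pos h, h]
      simp [Complex.conj_ofReal]
    · rw [if_neg h, if_neg h, mul_zero]

lemma Sstar_e (hT : IsCoveringMap T) (x : X) :
    (ContinuousLinearMap.adjoint S) (e x) = ((cw T (T x) : ℝ) : ℂ) • e (T x) := by
  apply lp.ext; funext z
  have h0 : ((ContinuousLinearMap.adjoint S) (e x) : ∀ _ : X, ℂ) z
      = @inner ℂ _ _ (S (e z)) (e x) := by
    rw [coord_eq_inner, ContinuousLinearMap.adjoint_inner_right]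
  have h1 : @inner ℂ _ _ (S (e z)) (e x) = (starRingEnd ℂ) ((S (e z) : ∀ _ : X, ℂ) x) := by
    rw [show e x = lp.single 2 x (1 : ℂ) from rfl, lp.inner_single_right]
    simp [RCLike.inner_apply]
  rw [h0, h1, S_coord hS hT, e_apply, lp.coeFn_smul, Pi.smul_apply, e_apply]
  by_cases h : T x = z
  · subst h; simp [Complex.conj_ofReal]
  · rw [if_neg h, mul_zero, map_zero, if_neg (fun hc : z = T x => h hc.symm), smul_zero]

lemma Sstar_pow_e (hT : IsCoveringMap T) (x : X) (n : ℕ) :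
    ((ContinuousLinearMap.adjoint S) ^ n) (e x)
      = (((∏ j ∈ Finset.range n, cw T (T^[j + 1] x) : ℝ)) : ℂ) • e (T^[n] x) := by
  induction n generalizing x with
  | zero => simp
  | succ n ih =>
    rw [pow_succ, ContinuousLinearMap.mul_apply, Sstar_e hS hT, map_smul, ih (T x)]
    have hprod : (∏ j ∈ Finset.range (n + 1), cw T (T^[j + 1] x))
        = cw T (T x) * ∏ j ∈ Finset.range n, cw T (T^[j + 1] (T x)) := by
      rw [Finset.prod_range_succ']
      simp only [Function.iterate_succ_apply]
      rw [mul_comm]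
      simp
    rw [smul_smul, hprod, ← Function.iterate_succ_apply]
    push_cast
    ring_nf
    simp only [Nat.succ_eq_add_one, Nat.add_comm 1 n]

lemma S_pow_e_coord (hT : IsCoveringMap T) (x z : X) (n : ℕ) :
    ((S ^ n) (e x) : ∀ _ : X, ℂ) z
      = if T^[n] z = x then (((∏ j ∈ Finset.range n, cw T (T^[j + 1] z) : ℝ)) : ℂ) else 0 := by
  induction n generalizing x z with
  | zero => simp [e_apply]; split_ifs with h <;> simp [h]
  | succ n ih =>
    rw [pow_succ', ContinuousLinearMap.mul_apply, S_coord hS hT, ih x (T z),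
      ← Function.iterate_succ_apply]
    by_cases h : T^[n + 1] z = x
    · rw [if_pos h, if_pos h]
      have hprod : (∏ j ∈ Finset.range (n + 1), cw T (T^[j + 1] z))
          = cw T (T z) * ∏ j ∈ Finset.range n, cw T (T^[j + 1] (T z)) := by
        rw [Finset.prod_range_succ']
        simp only [Function.iterate_succ_apply]
        rw [mul_comm]
        simp
      rw [hprod]
      push_cast
      ring
    · rw [if_neg h, if_neg h, mul_zero]

end Aux

open ContinuousLinearMap in
/-- Let `X` be a compact Hausdorff space, `T : X → X` a covering map and
`S` the bounded operator on `ℓ²(X)` with `S e_x = (ℒ(1)(x))^{-1/2} ∑_{y ∈ T⁻¹({x})} e_y`.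
Let `k, l ∈ ℕ`, let `U` be open with `T^k = T^l` on `U` and `T^k`, `T^l` injective on `U`,
and let `f : X → ℂ` be continuous with support contained in `U`. Then
`M_f S^k (S*)^l M_f = M_g` on `ℓ²(X)`, where `g(x) = f(x)²·(I_k(x)·I_l(x))^{-1/2}`. -/
theorem MfSkSlMf_eq_Mg {X : Type*} [TopologicalSpace X] [CompactSpace X] [T2Space X]
    (T : X → X) (hT : IsCoveringMap T) (hTsurj : Function.Surjective T)
    (S : l2 X →L[ℂ] l2 X)
    (hS : ∀ x : X, S (e x) = (((Real.sqrt (Nat.card (T ⁻¹' {x})))⁻¹ : ℝ) : ℂ) •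
      ∑ᶠ y ∈ T ⁻¹' {x}, e y)
    (k l : ℕ) (U : Set X) (hUopen : IsOpen U)
    (hU : ∀ x ∈ U, T^[k] x = T^[l] x)
    (hUinjk : Set.InjOn (T^[k]) U) (hUinjl : Set.InjOn (T^[l]) U)
    (f : C(X, ℂ)) (hf : tsupport f ⊆ U)
    (Mf Mg : l2 X →L[ℂ] l2 X)
    (hMf : ∀ x : X, Mf (e x) = f x • e x)
    (hMg : ∀ x : X, Mg (e x) =
      (f x ^ 2 * (((Real.sqrt (Ik T k x * Ik T l x))⁻¹ : ℝ) : ℂ)) • e x) :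
    Mf ∘L (S ^ k) ∘L ((adjoint S) ^ l) ∘L Mf = Mg := by
  refine ContinuousLinearMap.ext (ext_e _ _ (fun x => ?_))
  apply lp.ext; funext z
  rw [ContinuousLinearMap.comp_apply, ContinuousLinearMap.comp_apply,
    ContinuousLinearMap.comp_apply, hMf x, map_smul, Sstar_pow_e hS hT, map_smul,
    map_smul, map_smul, hMg x]
  simp only [lp.coeFn_smul, Pi.smul_apply]
  rw [mult_coord hMf]
  simp only [lp.coeFn_smul, Pi.smul_apply]
  rw [S_pow_e_coord hS hT, e_apply]
  simp only [smul_eq_mul]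
  by_cases hzx : z = x
  · subst hzx
    by_cases hfz : f z = 0
    · simp [hfz]
    · have hzU : z ∈ U := hf (subset_closure (by simpa [Function.mem_support] using hfz))
      rw [if_pos (hU z hzU), if_pos rfl]
      have key : (∏ j ∈ Finset.range l, cw T (T^[j + 1] z)) *
          (∏ j ∈ Finset.range k, cw T (T^[j + 1] z))
          = (Real.sqrt (Ik T k z * Ik T l z))⁻¹ := by
        rw [cw_prod, cw_prod, ← mul_inv,
          ← Real.sqrt_mul (Ik_nonneg T l z), mul_comm (Ik T l z)]
      rw [← key]
      push_cast
      ring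
  · rw [if_neg hzx, mul_zero]
    by_cases hfz : f z = 0
    · simp [hfz]
    by_cases hfx : f x = 0
    · simp [hfx]
    have hzU : z ∈ U := hf (subset_closure (by simpa [Function.mem_support] using hfz))
    have hxU : x ∈ U := hf (subset_closure (by simpa [Function.mem_support] using hfx))
    have hcond : ¬ (T^[k] z = T^[l] x) := fun hc =>
      hzx (hUinjk hzU hxU (hc.trans (hU x hxU).symm))
    rw [if_neg hcond]
    simp
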